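/- arXiv:math/0405144 — 2 statements merged into one kernel-verified Lean document; each statement's English description precedes it below -/
import Mathlib

section
/- For integers m ≥ 2, every root z of φ_m(z) = (z+1)(z+2)···(z+m-1) - m! satisfies Re(z) ≤ 1, with equality only for z = 1. That is, if z ≠ 1 is a root then Re(z) < 1. -/
open Polynomial

lemma re_lt_abs_of_im_ne_zero (w : ℂ) (h : w.im ≠ 0) : w.re < ‖w‖ := by
  have h1 : w.re ≤ |w.re| := le_abs_self _
  have h2 : |w.re| < ‖w‖ := by
    rw [Complex.norm_def, Complex.normSq_apply, ← Real.sqrt_sq_eq_abs]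
    apply Real.sqrt_lt_sqrt (sq_nonneg _)
    nlinarith [sq_pos_of_ne_zero h]
  linarith

lemma prod_j2 (n : ℕ) : ∏ j ∈ Finset.range n, ((j : ℝ) + 2) = (n + 1).factorial := by
  induction n with
  | zero => simp
  | succ k ih =>
    rw [Finset.prod_range_succ, ih]
    push_cast [Nat.factorial_succ]
    ring

theorem phi_roots_re_le_one (m : ℕ) (hm : 2 ≤ m) (z : ℂ)
    (hz : ((∏ j ∈ Finset.range (m - 1), (X + C ((j : ℂ) + 1))) -
      C ((m.factorial : ℂ))).IsRoot z) :
    z.re ≤ 1 ∧ (z ≠ 1 → z.re < 1) := by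
  set n := m - 1 with hn
  have hm' : m = n + 1 := by omega
  have heq : (∏ j ∈ Finset.range n, (z + ((j : ℂ) + 1))) = (m.factorial : ℂ) := by
    have h := hz
    simp only [Polynomial.IsRoot, Polynomial.eval_sub, Polynomial.eval_prod,
      Polynomial.eval_add, Polynomial.eval_X, Polynomial.eval_C, sub_eq_zero] at h
    exact h
  have habs : ∏ j ∈ Finset.range n, ‖z + ((j : ℂ) + 1)‖ = (m.factorial : ℝ) := by
    rw [← Complex.norm_prod, heq, Complex.norm_natCast]
  have key : ∀ (_ : 1 ≤ z.re) (_ : z.im ≠ 0 ∨ 1 < z.re), False := by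
    intro h1 h2
    have hlt : ∀ j ∈ Finset.range n, ((j : ℝ) + 2) < ‖z + ((j : ℂ) + 1)‖ := by
      intro j _
      have hre : (z + ((j : ℂ) + 1)).re = z.re + (j + 1) := by simp
      rcases h2 with him | hre1
      · have him' : (z + ((j : ℂ) + 1)).im ≠ 0 := by simpa using him
        have := re_lt_abs_of_im_ne_zero _ him'
        rw [hre] at this
        linarith
      · have := Complex.re_le_norm (z + ((j : ℂ) + 1))
        rw [hre] at this
        linarith
    have hprod : ∏ j ∈ Finset.range n, ((j : ℝ) + 2) <
        ∏ j ∈ Finset.range n, ‖z + ((j : ℂ) + 1)‖ := by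
      apply Finset.prod_lt_prod_of_nonempty
      · intro j _; positivity
      · exact hlt
      · exact Finset.nonempty_range_iff.mpr (by omega)
    rw [prod_j2, habs, ← hm'] at hprod
    exact lt_irrefl _ hprod
  constructor
  · by_contra h
    push_neg at h
    exact key h.le (Or.inr h)
  · intro hz1
    by_contra h
    push_neg at h
    by_cases him : z.im = 0
    · rcases h.eq_or_lt with he | hl
      · exact hz1 (Complex.ext he.symm (by simpa using him))
      · exact key h (Or.inr hl)
    · exact key h (Or.inl him)
end

section
/- Let λ₂ = σ + iτ with σ > 1/2 and τ ≠ 0. Let S₁ be Beta(1, m-1) distributed (the first spacing of m-1 uniforms on [0,1]), and conditionally on S₁ = s let J₁ be Binomial(n', s) with n' = n - (m-1). Then E[|J₁^{λ₂} - (nS₁)^{λ₂}|²] = o(n^{2σ}) as n → ∞, where z^{λ₂} := exp(λ₂ ln z) for z > 0 and 0^{λ₂} := 0. -/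
open MeasureTheory Filter Asymptotics

open Finset


theorem pmf_sum (N : ℕ) (s : ℝ) : ∑ j ∈ range (N+1), (N.choose j : ℝ) * s^j * (1-s)^(N-j) = 1 := by
  have h := add_pow s (1-s) N
  simp only [add_sub_cancel, one_pow] at h
  have h2 : ∑ j ∈ range (N+1), (N.choose j : ℝ) * s^j * (1-s)^(N-j)
      = ∑ j ∈ range (N+1), s^j * (1-s)^(N-j) * (N.choose j : ℝ) :=
    Finset.sum_congr rfl (fun j _ => by ring)
  rw [h2]; exact h.symm

theorem cheb_var (N : ℕ) (hN : 0 < N) (s : ℝ) (hs : s ∈ Set.Icc (0:ℝ) 1) :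
    ∑ j ∈ range (N+1), ((j:ℝ)/N - s)^2 * ((N.choose j : ℝ) * s^j * (1-s)^(N-j)) = s*(1-s)/N := by
  have h := bernstein.variance (n := N) (by omega) ⟨s, hs⟩
  rw [← Fin.sum_univ_eq_sum_range, ← h]
  apply Finset.sum_congr rfl
  intro k _
  rw [bernstein_apply]
  simp only [bernstein.z]
  ring

theorem aux_abs_le_one (lam : ℂ) (hre : 0 < lam.re) (x : ℝ) (h0 : 0 ≤ x) (h1 : x ≤ 1) :
    ‖((x:ℝ):ℂ)^lam‖ ≤ 1 := by
  have hlam0 : lam ≠ 0 := by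
    intro hh; rw [hh] at hre; simp at hre
  rcases eq_or_lt_of_le h0 with h | h
  · rw [← h]
    norm_num [Complex.zero_cpow hlam0]
  · rw [Complex.norm_cpow_eq_rpow_re_of_pos h]
    exact Real.rpow_le_one h.le h1 hre.le

theorem aux_H_le_four (lam : ℂ) (hre : 0 < lam.re) (x s : ℝ) (hx0 : 0 ≤ x) (hx1 : x ≤ 1)
    (hs0 : 0 ≤ s) (hs1 : s ≤ 1) :
    (‖((x:ℝ):ℂ)^lam - ((s:ℝ):ℂ)^lam‖)^2 ≤ 4 := by
  have htri : ‖((x:ℝ):ℂ)^lam - ((s:ℝ):ℂ)^lam‖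
      ≤ ‖((x:ℝ):ℂ)^lam‖ + ‖((s:ℝ):ℂ)^lam‖ := by
    have := norm_sub_le (((x:ℝ):ℂ)^lam) (((s:ℝ):ℂ)^lam)
    exact this
  have h : ‖((x:ℝ):ℂ)^lam - ((s:ℝ):ℂ)^lam‖ ≤ 2 := by
    calc ‖((x:ℝ):ℂ)^lam - ((s:ℝ):ℂ)^lam‖
        ≤ ‖((x:ℝ):ℂ)^lam‖ + ‖((s:ℝ):ℂ)^lam‖ := htri
      _ ≤ 1 + 1 := add_le_add (aux_abs_le_one lam hre x hx0 hx1) (aux_abs_le_one lam hre s hs0 hs1)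
      _ = 2 := by norm_num
  calc (‖((x:ℝ):ℂ)^lam - ((s:ℝ):ℂ)^lam‖)^2 ≤ 2^2 :=
        pow_le_pow_left₀ (norm_nonneg _) h 2
    _ = 4 := by norm_num

theorem aux_pointwise (lam : ℂ) (hre : 0 < lam.re) (m : ℕ) (s : ℝ) (hs0 : 0 < s) (hs1 : s < 1) :
    Filter.Tendsto (fun n : ℕ =>
      ∑ j ∈ range (n - (m-1) + 1),
        ((n - (m-1)).choose j : ℝ) * s ^ j * (1 - s) ^ (n - (m-1) - j) *
          (‖((((j:ℝ)/(n:ℝ)) : ℝ):ℂ)^lam - ((s:ℝ):ℂ)^lam‖)^2)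
      Filter.atTop (nhds 0) := by
  set H : ℝ → ℝ := fun x => (‖((x:ℝ):ℂ)^lam - ((s:ℝ):ℂ)^lam‖)^2 with hH
  have hHcont : Continuous H := by
    have h1 : Continuous fun x:ℝ => ((x:ℝ):ℂ)^lam := Complex.continuous_ofReal_cpow_const hre
    exact (continuous_norm.comp (h1.sub continuous_const)).pow 2
  have hH0 : H s = 0 := by simp [hH]
  have hHnn : ∀ x, 0 ≤ H x := fun x => by positivity
  have hH4 : ∀ x : ℝ, 0 ≤ x → x ≤ 1 → H x ≤ 4 := fun x h0 h1 =>
    aux_H_le_four lam hre x s h0 h1 hs0.le hs1.le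
  rw [NormedAddCommGroup.tendsto_nhds_zero]
  intro ε hε
  obtain ⟨δ, hδ, hd⟩ := Metric.continuousAt_iff.mp hHcont.continuousAt (ε/2) (half_pos hε)
  have hev1 : ∀ᶠ n : ℕ in atTop, m + 1 ≤ n := eventually_ge_atTop (m+1)
  have hev2 : ∀ᶠ n : ℕ in atTop, ((m:ℝ))/(n:ℝ) < δ/2 :=
    (tendsto_const_div_atTop_nhds_zero_nat (m:ℝ)).eventually_lt_const (by positivity)
  have hev3 : ∀ᶠ n : ℕ in atTop, (64/(δ^2*ε) : ℝ) ≤ ((n - (m-1) : ℕ) : ℝ) :=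
    (tendsto_natCast_atTop_atTop.comp (tendsto_sub_atTop_nat (m-1))).eventually_ge_atTop _
  filter_upwards [hev1, hev2, hev3] with n h1 h2 h3
  set N := n - (m-1) with hNdef
  have hN1 : 1 ≤ N := by omega
  have hn1 : 1 ≤ n := by omega
  have hNR : (0:ℝ) < (N:ℝ) := by exact_mod_cast hN1
  have hnR : (0:ℝ) < (n:ℝ) := by exact_mod_cast hn1
  have h1s : (0:ℝ) < 1 - s := by linarith
  set pmf : ℕ → ℝ := fun j => (N.choose j : ℝ) * s^j * (1-s)^(N-j) with hpmf
  have hpmfnn : ∀ j, 0 ≤ pmf j := fun j => by positivity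
  have hsum_eq : ∑ j ∈ range (N + 1),
        (N.choose j : ℝ) * s ^ j * (1 - s) ^ (N - j) *
          (‖((((j:ℝ)/(n:ℝ)) : ℝ):ℂ)^lam - ((s:ℝ):ℂ)^lam‖)^2
      = ∑ j ∈ range (N + 1), pmf j * H ((j:ℝ)/(n:ℝ)) := rfl
  rw [hsum_eq]
  have hnonneg : 0 ≤ ∑ j ∈ range (N + 1), pmf j * H ((j:ℝ)/(n:ℝ)) :=
    Finset.sum_nonneg fun j _ => mul_nonneg (hpmfnn j) (hHnn _)
  rw [Real.norm_of_nonneg hnonneg]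
  set p : ℕ → Prop := fun j => dist ((j:ℝ)/(n:ℝ)) s < δ with hp
  have hsplit := Finset.sum_filter_add_sum_filter_not (range (N+1)) p
    (fun j => pmf j * H ((j:ℝ)/(n:ℝ)))
  rw [← hsplit]
  -- good part
  have hgood : ∑ j ∈ (range (N+1)).filter p, pmf j * H ((j:ℝ)/(n:ℝ)) ≤ ε/2 := by
    calc ∑ j ∈ (range (N+1)).filter p, pmf j * H ((j:ℝ)/(n:ℝ))
        ≤ ∑ j ∈ (range (N+1)).filter p, pmf j * (ε/2) := by
          apply Finset.sum_le_sum
          intro j hj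
          apply mul_le_mul_of_nonneg_left _ (hpmfnn j)
          have hdj := hd (Finset.mem_filter.mp hj).2
          rw [hH0, dist_zero_right, Real.norm_of_nonneg (hHnn _)] at hdj
          exact hdj.le
      _ = (∑ j ∈ (range (N+1)).filter p, pmf j) * (ε/2) := by rw [← Finset.sum_mul]
      _ ≤ 1 * (ε/2) := by
          apply mul_le_mul_of_nonneg_right _ (by positivity)
          calc ∑ j ∈ (range (N+1)).filter p, pmf j
              ≤ ∑ j ∈ range (N+1), pmf j :=
                Finset.sum_le_sum_of_subset_of_nonneg (Finset.filter_subset _ _)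
                  (fun j _ _ => hpmfnn j)
            _ = 1 := pmf_sum N s
      _ = ε/2 := one_mul _
  -- bad part: pmf mass bound
  have hbadpmf : ∑ j ∈ (range (N+1)).filter (fun j => ¬ p j), pmf j
      ≤ (4/δ^2) * (1/(N:ℝ)) := by
    have hterm : ∀ j ∈ (range (N+1)).filter (fun j => ¬ p j),
        pmf j ≤ (4/δ^2) * (((j:ℝ)/(N:ℝ) - s)^2 * pmf j) := by
      intro j hj
      obtain ⟨hjr, hjp⟩ := Finset.mem_filter.mp hj
      have hjN : j ≤ N := Nat.lt_succ_iff.mp (Finset.mem_range.mp hjr)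
      have hjNR : (j:ℝ) ≤ (N:ℝ) := by exact_mod_cast hjN
      have hNn : (N:ℝ) ≤ (n:ℝ) := by exact_mod_cast (by omega : N ≤ n)
      have ha : (j:ℝ)/(n:ℝ) ≤ (j:ℝ)/(N:ℝ) :=
        div_le_div_of_nonneg_left (by positivity) hNR hNn
      have hdiff : (j:ℝ)/(N:ℝ) - (j:ℝ)/(n:ℝ) ≤ δ/2 := by
        have hnN : (n:ℝ) - (N:ℝ) ≤ (m:ℝ) := by
          have hc : (N:ℝ) = (n:ℝ) - ((m-1:ℕ):ℝ) := by
            rw [hNdef, Nat.cast_sub (by omega)]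
          have hc2 : ((m-1:ℕ):ℝ) ≤ (m:ℝ) := by exact_mod_cast (by omega : m - 1 ≤ m)
          rw [hc]; linarith
        have key : (j:ℝ)/(N:ℝ) - (j:ℝ)/(n:ℝ) = ((j:ℝ)/(N:ℝ)) * (((n:ℝ) - (N:ℝ))/(n:ℝ)) := by
          field_simp
        rw [key]
        have hb1 : (j:ℝ)/(N:ℝ) ≤ 1 := by rw [div_le_one hNR]; exact hjNR
        have hb2 : ((n:ℝ) - (N:ℝ))/(n:ℝ) ≤ (m:ℝ)/(n:ℝ) := by gcongr
        have hnn2 : (0:ℝ) ≤ ((n:ℝ) - (N:ℝ))/(n:ℝ) := by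
          apply div_nonneg _ hnR.le; linarith
        calc ((j:ℝ)/(N:ℝ)) * (((n:ℝ) - (N:ℝ))/(n:ℝ)) ≤ 1 * ((m:ℝ)/(n:ℝ)) :=
              mul_le_mul hb1 hb2 hnn2 zero_le_one
          _ = (m:ℝ)/(n:ℝ) := one_mul _
          _ ≤ δ/2 := h2.le
      -- |j/N - s| ≥ δ/2
      have hdistn : δ ≤ |(j:ℝ)/(n:ℝ) - s| := by
        rw [hp] at hjp
        simp only [Real.dist_eq, not_lt] at hjp
        exact hjp
      have habsd : |(j:ℝ)/(n:ℝ) - (j:ℝ)/(N:ℝ)| ≤ δ/2 := by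
        rw [abs_sub_comm, abs_of_nonneg (by linarith : (0:ℝ) ≤ (j:ℝ)/(N:ℝ) - (j:ℝ)/(n:ℝ))]
        exact hdiff
      have hbd : δ/2 ≤ |(j:ℝ)/(N:ℝ) - s| := by
        have := abs_sub_le ((j:ℝ)/(n:ℝ)) ((j:ℝ)/(N:ℝ)) s
        linarith
      have h14 : 1 ≤ (4/δ^2) * ((j:ℝ)/(N:ℝ) - s)^2 := by
        have hsq : (δ/2)^2 ≤ ((j:ℝ)/(N:ℝ) - s)^2 := by
          have hh := pow_le_pow_left₀ (by positivity : (0:ℝ) ≤ δ/2) hbd 2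
          rwa [sq_abs] at hh
        rw [div_mul_eq_mul_div, le_div_iff₀ (by positivity : (0:ℝ) < δ^2)]
        nlinarith
      calc pmf j = 1 * pmf j := (one_mul _).symm
        _ ≤ ((4/δ^2) * (((j:ℝ)/(N:ℝ) - s)^2)) * pmf j :=
            mul_le_mul_of_nonneg_right h14 (hpmfnn j)
        _ = (4/δ^2) * (((j:ℝ)/(N:ℝ) - s)^2 * pmf j) := by ring
    calc ∑ j ∈ (range (N+1)).filter (fun j => ¬ p j), pmf j
        ≤ ∑ j ∈ (range (N+1)).filter (fun j => ¬ p j),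
            (4/δ^2) * (((j:ℝ)/(N:ℝ) - s)^2 * pmf j) := Finset.sum_le_sum hterm
      _ = (4/δ^2) * ∑ j ∈ (range (N+1)).filter (fun j => ¬ p j),
            ((j:ℝ)/(N:ℝ) - s)^2 * pmf j := by rw [← Finset.mul_sum]
      _ ≤ (4/δ^2) * ∑ j ∈ range (N+1), ((j:ℝ)/(N:ℝ) - s)^2 * pmf j := by
          apply mul_le_mul_of_nonneg_left _ (by positivity)
          apply Finset.sum_le_sum_of_subset_of_nonneg (Finset.filter_subset _ _)
          intro j _ _
          exact mul_nonneg (sq_nonneg _) (hpmfnn j)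
      _ = (4/δ^2) * (s*(1-s)/(N:ℝ)) := by
          rw [cheb_var N (by omega) s ⟨hs0.le, hs1.le⟩]
      _ ≤ (4/δ^2) * (1/(N:ℝ)) := by
          apply mul_le_mul_of_nonneg_left _ (by positivity)
          gcongr
          nlinarith
  -- bad part: total
  have hbad : ∑ j ∈ (range (N+1)).filter (fun j => ¬ p j), pmf j * H ((j:ℝ)/(n:ℝ)) ≤ ε/4 := by
    have hstep : ∑ j ∈ (range (N+1)).filter (fun j => ¬ p j), pmf j * H ((j:ℝ)/(n:ℝ))
        ≤ 4 * ∑ j ∈ (range (N+1)).filter (fun j => ¬ p j), pmf j := by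
      rw [Finset.mul_sum]
      apply Finset.sum_le_sum
      intro j hj
      have hjN : j ≤ N := Nat.lt_succ_iff.mp (Finset.mem_range.mp (Finset.mem_filter.mp hj).1)
      have hx0 : (0:ℝ) ≤ (j:ℝ)/(n:ℝ) := by positivity
      have hx1 : (j:ℝ)/(n:ℝ) ≤ 1 := by
        rw [div_le_one hnR]
        exact_mod_cast le_trans hjN (by omega : N ≤ n)
      calc pmf j * H ((j:ℝ)/(n:ℝ)) ≤ pmf j * 4 :=
            mul_le_mul_of_nonneg_left (hH4 _ hx0 hx1) (hpmfnn j)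
        _ = 4 * pmf j := by ring
    have hN64 : (64/(δ^2*ε) : ℝ) ≤ (N:ℝ) := h3
    have hfinal : 4 * ((4/δ^2) * (1/(N:ℝ))) ≤ ε/4 := by
      have h64 : (64:ℝ) ≤ (N:ℝ)*(δ^2*ε) := by
        rw [div_le_iff₀ (by positivity)] at hN64; exact hN64
      have he : 4 * ((4/δ^2) * (1/(N:ℝ))) = 16/(δ^2*(N:ℝ)) := by
        field_simp
        norm_num
      rw [he, div_le_div_iff₀ (by positivity) (by norm_num : (0:ℝ) < 4)]
      nlinarith
    calc ∑ j ∈ (range (N+1)).filter (fun j => ¬ p j), pmf j * H ((j:ℝ)/(n:ℝ))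
        ≤ 4 * ∑ j ∈ (range (N+1)).filter (fun j => ¬ p j), pmf j := hstep
      _ ≤ 4 * ((4/δ^2) * (1/(N:ℝ))) := by linarith [hbadpmf]
      _ ≤ ε/4 := hfinal
  linarith [hgood, hbad]

theorem aux_scale (lam : ℂ) (n : ℕ) (hn : 0 < n) (s : ℝ) (hs : 0 ≤ s) (j : ℕ) :
    (‖(j : ℂ) ^ lam - (((n : ℝ) * s : ℝ) : ℂ) ^ lam‖) ^ 2
      = (n:ℝ)^(2*lam.re) * (‖((((j:ℝ)/(n:ℝ)) : ℝ):ℂ)^lam - ((s:ℝ):ℂ)^lam‖)^2 := by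
  have hnR : (0:ℝ) < (n:ℝ) := by exact_mod_cast hn
  have e1 : (((n : ℝ) * s : ℝ) : ℂ) ^ lam = ((n:ℝ):ℂ)^lam * ((s:ℝ):ℂ)^lam := by
    rw [Complex.ofReal_mul]; exact Complex.mul_cpow_ofReal_nonneg hnR.le hs lam
  have e2 : (j : ℂ) ^ lam = ((n:ℝ):ℂ)^lam * (((((j:ℝ)/(n:ℝ)) : ℝ)):ℂ)^lam := by
    rw [← Complex.mul_cpow_ofReal_nonneg hnR.le (by positivity) lam]
    rw [← Complex.ofReal_mul]
    have : (n:ℝ) * ((j:ℝ)/(n:ℝ)) = (j:ℝ) := by field_simp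
    rw [this]
    norm_num
  rw [e1, e2, ← mul_sub, norm_mul, mul_pow, Complex.norm_cpow_eq_rpow_re_of_pos hnR]
  congr 1
  rw [← Real.rpow_natCast ((n:ℝ)^lam.re) 2, ← Real.rpow_mul hnR.le]
  norm_num [mul_comm]


/-- With `S₁ ~ Beta(1, m-1)` and, conditionally on `S₁ = s`, `J₁ ~ Binomial(n-(m-1), s)`,
the mixed expectation `E[|J₁^λ - (nS₁)^λ|²]`, written out as an integral against the
Beta density of the binomial expectation, is `o(n^{2σ})` where `σ = Re λ > 1/2`. -/
theorem mixed_binomial_power_estimate (m : ℕ) (hm : 2 ≤ m)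
    (lam : ℂ) (hσ : 1 / 2 < lam.re) (hτ : lam.im ≠ 0) :
    (fun n : ℕ =>
        ∫ s in Set.Icc (0 : ℝ) 1,
          ((m - 1 : ℝ) * (1 - s) ^ (m - 2)) *
            ∑ j ∈ Finset.range (n - (m - 1) + 1),
              ((n - (m - 1)).choose j : ℝ) * s ^ j * (1 - s) ^ (n - (m - 1) - j) *
                (‖(j : ℂ) ^ lam - (((n : ℝ) * s : ℝ) : ℂ) ^ lam‖) ^ 2)
      =o[atTop] fun n : ℕ => (n : ℝ) ^ (2 * lam.re) := by
  have hre : 0 < lam.re := lt_trans (by norm_num) hσ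
  have hm1 : (1:ℝ) ≤ (m:ℝ) - 1 := by
    have : (2:ℝ) ≤ (m:ℝ) := by exact_mod_cast hm
    linarith
  set F : ℕ → ℝ → ℝ := fun n s =>
    ((m - 1 : ℝ) * (1 - s) ^ (m - 2)) *
      ∑ j ∈ Finset.range (n - (m-1) + 1),
        ((n - (m-1)).choose j : ℝ) * s ^ j * (1 - s) ^ (n - (m-1) - j) *
          (‖((((j:ℝ)/(n:ℝ)) : ℝ):ℂ) ^ lam - ((s:ℝ):ℂ) ^ lam‖) ^ 2
    with hF
  -- dominated convergence
  have hlim : Filter.Tendsto (fun n => ∫ s in Set.Icc (0:ℝ) 1, F n s)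
      Filter.atTop (nhds 0) := by
    have key := MeasureTheory.tendsto_integral_of_dominated_convergence
      (μ := volume.restrict (Set.Icc (0:ℝ) 1)) (F := F) (f := fun _ => (0:ℝ))
      (bound := fun _ => ((m:ℝ)-1) * 4) ?_ ?_ ?_ ?_
    · simpa using key
    · intro n
      apply Continuous.aestronglyMeasurable
      apply Continuous.mul
      · exact (continuous_const.mul ((continuous_const.sub continuous_id).pow _))
      · apply continuous_finset_sum
        intro j _
        apply Continuous.mul
        · exact ((continuous_const.mul (continuous_pow j)).mul
            ((continuous_const.sub continuous_id).pow _))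
        · exact (continuous_norm.comp
            (continuous_const.sub (Complex.continuous_ofReal_cpow_const hre))).pow 2
    · exact MeasureTheory.integrable_const _
    · intro n
      filter_upwards [MeasureTheory.self_mem_ae_restrict measurableSet_Icc] with s hs
      obtain ⟨hs0, hs1⟩ := hs
      have h1s : (0:ℝ) ≤ 1 - s := by linarith
      have hsum_nn : 0 ≤ ∑ j ∈ Finset.range (n - (m-1) + 1),
          ((n - (m-1)).choose j : ℝ) * s ^ j * (1 - s) ^ (n - (m-1) - j) *
            (‖((((j:ℝ)/(n:ℝ)) : ℝ):ℂ) ^ lam - ((s:ℝ):ℂ) ^ lam‖)^2 :=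
        Finset.sum_nonneg fun j _ => by positivity
    
      have hβnn : 0 ≤ (m - 1 : ℝ) * (1 - s) ^ (m - 2) := by positivity
      have hFnn : 0 ≤ F n s := mul_nonneg hβnn hsum_nn
      rw [Real.norm_of_nonneg hFnn]
      have hsum_le : ∑ j ∈ Finset.range (n - (m-1) + 1),
          ((n - (m-1)).choose j : ℝ) * s ^ j * (1 - s) ^ (n - (m-1) - j) *
            (‖((((j:ℝ)/(n:ℝ)) : ℝ):ℂ) ^ lam - ((s:ℝ):ℂ) ^ lam‖)^2 ≤ 4 := by
        calc ∑ j ∈ Finset.range (n - (m-1) + 1),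
            ((n - (m-1)).choose j : ℝ) * s ^ j * (1 - s) ^ (n - (m-1) - j) *
              (‖((((j:ℝ)/(n:ℝ)) : ℝ):ℂ) ^ lam - ((s:ℝ):ℂ) ^ lam‖)^2
            ≤ ∑ j ∈ Finset.range (n - (m-1) + 1),
              ((n - (m-1)).choose j : ℝ) * s ^ j * (1 - s) ^ (n - (m-1) - j) * 4 := by
              apply Finset.sum_le_sum
              intro j hj
              apply mul_le_mul_of_nonneg_left _ (by positivity)
              exact aux_H_le_four lam hre _ s (by positivity) (by
                rcases Nat.eq_zero_or_pos n with h | h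
                · simp [h]
                · rw [div_le_one (by exact_mod_cast h)]
                  have hjle : j ≤ n - (m-1) := Nat.lt_succ_iff.mp (Finset.mem_range.mp hj)
                  exact_mod_cast le_trans hjle (Nat.sub_le _ _)) hs0 hs1
          _ = (∑ j ∈ Finset.range (n - (m-1) + 1),
              ((n - (m-1)).choose j : ℝ) * s ^ j * (1 - s) ^ (n - (m-1) - j)) * 4 := by
              rw [← Finset.sum_mul]
          _ = 1 * 4 := by rw [pmf_sum]
          _ = 4 := one_mul _
      have hβle : (m - 1 : ℝ) * (1 - s) ^ (m - 2) ≤ (m:ℝ) - 1 := by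
        have hpow : (1 - s) ^ (m - 2) ≤ 1 :=
          pow_le_one₀ h1s (by linarith)
        calc (m - 1 : ℝ) * (1 - s) ^ (m - 2) ≤ ((m:ℝ) - 1) * 1 := by
              apply mul_le_mul_of_nonneg_left hpow (by linarith)
          _ = (m:ℝ) - 1 := mul_one _
      exact mul_le_mul hβle hsum_le hsum_nn (by linarith)
    · have hae : ∀ᵐ s ∂(volume.restrict (Set.Icc (0:ℝ) 1)), s ∈ Set.Ioo (0:ℝ) 1 := by
        rw [← MeasureTheory.Measure.restrict_congr_set MeasureTheory.Ioo_ae_eq_Icc]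
        exact MeasureTheory.ae_restrict_mem measurableSet_Ioo
      filter_upwards [hae] with s hs
      have hT := aux_pointwise lam hre m s hs.1 hs.2
      have := hT.const_mul ((m - 1 : ℝ) * (1 - s) ^ (m - 2))
      simpa only [mul_zero] using this
  rw [Asymptotics.isLittleO_iff_tendsto']
  · apply Filter.Tendsto.congr' _ hlim
    filter_upwards [Filter.eventually_ge_atTop 1] with n hn
    have hnpos : 0 < n := hn
    have hnR : (0:ℝ) < (n:ℝ) := by exact_mod_cast hnpos
    have hc : (0:ℝ) < (n:ℝ)^(2*lam.re) := Real.rpow_pos_of_pos hnR _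
    have hI : ∫ s in Set.Icc (0:ℝ) 1,
          ((m - 1 : ℝ) * (1 - s) ^ (m - 2)) *
            ∑ j ∈ Finset.range (n - (m - 1) + 1),
              ((n - (m - 1)).choose j : ℝ) * s ^ j * (1 - s) ^ (n - (m - 1) - j) *
                (‖(j : ℂ) ^ lam - (((n : ℝ) * s : ℝ) : ℂ) ^ lam‖) ^ 2
        = ∫ s in Set.Icc (0:ℝ) 1, ((n:ℝ)^(2*lam.re)) * F n s := by
      apply MeasureTheory.setIntegral_congr_fun measurableSet_Icc
      intro s hs
      dsimp only
      have hsum : ∑ j ∈ Finset.range (n - (m - 1) + 1),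
            ((n - (m - 1)).choose j : ℝ) * s ^ j * (1 - s) ^ (n - (m - 1) - j) *
              (‖(j : ℂ) ^ lam - (((n : ℝ) * s : ℝ) : ℂ) ^ lam‖) ^ 2
          = ∑ j ∈ Finset.range (n - (m - 1) + 1),
            ((n:ℝ)^(2*lam.re)) * (((n - (m - 1)).choose j : ℝ) * s ^ j * (1 - s) ^ (n - (m - 1) - j) *
              (‖((((j:ℝ)/(n:ℝ)) : ℝ):ℂ) ^ lam - ((s:ℝ):ℂ) ^ lam‖) ^ 2) := by
        apply Finset.sum_congr rfl
        intro j _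
        rw [aux_scale lam n hnpos s hs.1 j]
        ring
      rw [hsum, ← Finset.mul_sum]
      show ((m - 1 : ℝ) * (1 - s) ^ (m - 2)) * _ = _
      ring
    rw [eq_comm, hI, MeasureTheory.integral_const_mul]
    rw [mul_div_cancel_left₀ _ hc.ne']
  · filter_upwards [Filter.eventually_ge_atTop 1] with n hn h
    exfalso
    have hnR : (0:ℝ) < (n:ℝ) := by exact_mod_cast hn
    exact (Real.rpow_pos_of_pos hnR _).ne' h
end
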